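/- Let κ be a regular uncountable cardinal and (λ_i)_{i∈κ} a sequence of cardinals with 1 < λ_i < κ for all i. Let X = {x ∈ ∏_{i∈κ} λ_i : x(i) ≠ 0 for only finitely many i}, topologized by the base of sets U_α[x] = {y ∈ X : y|α = x|α} for x ∈ X and α ∈ κ. Then for every open cover 𝒱 of X there exists an ordinal α ∈ κ such that for every x ∈ X the set U_α[x] is contained in some member of 𝒱; consequently X is paracompact. -/

import Mathlib

/-- The ordinals below the initial ordinal of the cardinal `κ`, i.e. `κ` viewed
as a well-ordered set. -/
abbrev SmallOrd (κ : Cardinal) := {o : Ordinal // o < κ.ord}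

/-- The `σ`-product `⊙_{i ∈ κ} λ_i`: the finitely supported elements of the product
`∏_{i ∈ κ} λ_i` of the cardinals `λ i` (each element of `λ i` encoded as an ordinal
below `(λ i).ord`). -/
abbrev SigmaProd (κ : Cardinal) (lam : SmallOrd κ → Cardinal) :=
  {x : SmallOrd κ → Ordinal // (∀ i, x i < (lam i).ord) ∧ {i | x i ≠ 0}.Finite}

/-- The basic set `U_α[x] = {y : y|α = x|α}`. -/
def basicSet {κ : Cardinal} {lam : SmallOrd κ → Cardinal}
    (x : SigmaProd κ lam) (α : Ordinal) : Set (SigmaProd κ lam) :=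
  {y | ∀ i : SmallOrd κ, (i : Ordinal) < α → y.1 i = x.1 i}

/-- The topology on the `σ`-product generated by the base of sets `U_α[x]`,
`x ∈ X`, `α ∈ κ`. -/
instance (κ : Cardinal) (lam : SmallOrd κ → Cardinal) :
    TopologicalSpace (SigmaProd κ lam) :=
  TopologicalSpace.generateFrom
    {S | ∃ (x : SigmaProd κ lam) (α : Ordinal), α < κ.ord ∧ S = basicSet x α}

namespace Stmt19

universe u
variable {κ : Cardinal.{u}} {lam : SmallOrd κ → Cardinal.{u}}

lemma basicSet_mono (x : SigmaProd κ lam) {α β : Ordinal} (h : β ≤ α) :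
    basicSet x α ⊆ basicSet x β := fun _ hy i hi => hy i (hi.trans_le h)

lemma mem_basicSet_self (x : SigmaProd κ lam) (α : Ordinal) : x ∈ basicSet x α :=
  fun _ _ => rfl

lemma basicSet_subset_of_mem {x z : SigmaProd κ lam} {α : Ordinal}
    (h : x ∈ basicSet z α) : basicSet x α ⊆ basicSet z α :=
  fun _ hy i hi => (hy i hi).trans (h i hi)

lemma isOpen_basicSet (x : SigmaProd κ lam) {α : Ordinal} (hα : α < κ.ord) :
    IsOpen (basicSet x α) :=
  TopologicalSpace.GenerateOpen.basic _ ⟨x, α, hα, rfl⟩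

lemma exists_basic (h0 : (0 : Ordinal) < κ.ord) {U : Set (SigmaProd κ lam)}
    (hU : IsOpen U) : ∀ x ∈ U, ∃ α, α < κ.ord ∧ basicSet x α ⊆ U := by
  have hU' : TopologicalSpace.GenerateOpen
      {S | ∃ (x : SigmaProd κ lam) (α : Ordinal), α < κ.ord ∧ S = basicSet x α} U := hU
  clear hU
  induction hU' with
  | basic S hS =>
    rintro x hx
    obtain ⟨z, α, hα, rfl⟩ := hS
    exact ⟨α, hα, basicSet_subset_of_mem hx⟩
  | univ => exact fun x _ => ⟨0, h0, Set.subset_univ _⟩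
  | inter U V _ _ ihU ihV =>
    rintro x ⟨hxU, hxV⟩
    obtain ⟨α, hα, hsU⟩ := ihU x hxU
    obtain ⟨β, hβ, hsV⟩ := ihV x hxV
    exact ⟨max α β, max_lt hα hβ,
      Set.subset_inter ((basicSet_mono x (le_max_left α β)).trans hsU)
        ((basicSet_mono x (le_max_right α β)).trans hsV)⟩
  | sUnion S _ ih =>
    rintro x ⟨U, hUS, hxU⟩
    obtain ⟨α, hα, hs⟩ := ih U hUS x hxU
    exact ⟨α, hα, hs.trans (Set.subset_sUnion_of_mem hUS)⟩

open Classical in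
noncomputable def decode (κ : Cardinal.{u}) (ν : Ordinal.{u}) :
    List (ν.ToType × ν.ToType) → SmallOrd κ → Ordinal
  | [], _ => 0
  | p :: t, i =>
    if (((Ordinal.ToType.mk (o := ν)).symm p.1 : Set.Iio ν) : Ordinal) = (i : Ordinal)
    then (((Ordinal.ToType.mk (o := ν)).symm p.2 : Set.Iio ν) : Ordinal)
    else decode κ ν t i

lemma exists_decode {ν : Ordinal} (f : SmallOrd κ → Ordinal)
    (S : Finset (SmallOrd κ)) (hS : ∀ i, f i ≠ 0 → i ∈ S)
    (hb : ∀ i ∈ S, (i : Ordinal) < ν ∧ f i < ν) :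
    ∃ l : List (ν.ToType × ν.ToType), ∀ i, decode κ ν l i = f i := by
  classical
  induction S using Finset.induction generalizing f with
  | empty =>
    refine ⟨[], fun i => ?_⟩
    have : f i = 0 := by
      by_contra h
      exact absurd (hS i h) (Finset.notMem_empty i)
    simp [decode, this]
  | @insert a S ha ih =>
    by_cases hfa : f a = 0
    · refine ih f (fun i hi => ?_) (fun i hi => hb i (Finset.mem_insert_of_mem hi))
      rcases Finset.mem_insert.1 (hS i hi) with rfl | h
      · exact absurd hfa hi
      · exact h
    · set f' := Function.update f a 0 with hf'
      obtain ⟨l, hl⟩ := ih f'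
        (fun i hi => by
          have hia : i ≠ a := by
            rintro rfl
            exact hi (Function.update_self _ _ _)
          rw [hf', Function.update_of_ne hia] at hi
          exact (Finset.mem_insert.1 (hS i hi)).resolve_left hia
          )
        (fun i hi => by
          have hia : i ≠ a := fun h => ha (h ▸ hi)
          rw [hf', Function.update_of_ne hia]
          exact hb i (Finset.mem_insert_of_mem hi))
      have haν := hb a (Finset.mem_insert_self a S)
      refine ⟨((Ordinal.ToType.mk (o := ν)) ⟨(a : Ordinal), haν.1⟩,
        (Ordinal.ToType.mk (o := ν)) ⟨f a, haν.2⟩) :: l, fun i => ?_⟩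
      show (if _ then _ else _) = f i
      rw [OrderIso.symm_apply_apply, OrderIso.symm_apply_apply]
      by_cases hia : ((⟨(a : Ordinal), haν.1⟩ : Set.Iio ν) : Ordinal) = (i : Ordinal)
      · have : i = a := Subtype.ext hia.symm
        subst this
        rw [if_pos hia]
      · rw [if_neg hia, hl i, hf', Function.update_of_ne]
        rintro rfl
        exact hia rfl

end Stmt19

namespace Stmt19

theorem uniform {κ : Cardinal.{u}} {lam : SmallOrd κ → Cardinal.{u}}
    (hreg : κ.IsRegular) (hunc : Cardinal.aleph0 < κ)
    (hlam : ∀ i, 1 < lam i ∧ lam i < κ)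
    (𝒱 : Set (Set (SigmaProd κ lam))) (hop : ∀ V ∈ 𝒱, IsOpen V)
    (hcov : ⋃₀ 𝒱 = Set.univ) :
    ∃ α < κ.ord, ∀ x : SigmaProd κ lam, ∃ V ∈ 𝒱, basicSet x α ⊆ V := by
  classical
  have h0 : (0 : Ordinal) < κ.ord := by
    rw [Cardinal.lt_ord]
    simpa using hreg.pos
  -- choose, for each point, a basic neighborhood inside a member of the cover
  have hbase : ∀ x : SigmaProd κ lam, ∃ α : Ordinal, ∃ V ∈ 𝒱,
      α < κ.ord ∧ basicSet x α ⊆ V := by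
    intro x
    have hx : x ∈ ⋃₀ 𝒱 := hcov ▸ Set.mem_univ x
    obtain ⟨V, hV, hxV⟩ := hx
    obtain ⟨α, hα, hs⟩ := exists_basic h0 (hop V hV) x hxV
    exact ⟨α, V, hV, hα, hs⟩
  choose A V hV hA hAs using hbase
  -- key boundedness step
  have bound : ∀ α, α < κ.ord → ∃ β, β < κ.ord ∧
      ∀ x : SigmaProd κ lam, (∀ i : SmallOrd κ, α ≤ (i : Ordinal) → x.1 i = 0) →
        A x ≤ β := by
    intro α hα
    set ν : Ordinal :=
      max α (Ordinal.bsup α fun a ha => (lam ⟨a, ha.trans hα⟩).ord) with hνdef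
    have hν : ν < κ.ord := by
      refine max_lt hα (Cardinal.bsup_lt_ord_of_isRegular hreg (Cardinal.lt_ord.1 hα)
        fun a ha => Cardinal.ord_lt_ord.2 (hlam _).2)
    set f : List (ν.ToType × ν.ToType) → Ordinal := fun l =>
      if h : ∃ x : SigmaProd κ lam, x.1 = decode κ ν l then A h.choose else 0
      with hfdef
    refine ⟨iSup f, Cardinal.iSup_lt_ord_of_isRegular hreg ?_ fun l => ?_, ?_⟩
    · -- cardinality of the index type
      rcases isEmpty_or_nonempty (ν.ToType × ν.ToType) with hE | hN
      · exact lt_of_le_of_lt Cardinal.mk_le_aleph0 hunc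
      · rw [Cardinal.mk_list_eq_max_mk_aleph0]
        refine max_lt ?_ hunc
        simp only [Cardinal.mk_prod, Cardinal.mk_toType, Cardinal.lift_id]
        exact Cardinal.mul_lt_of_lt hreg.aleph0_le (Cardinal.lt_ord.1 hν)
          (Cardinal.lt_ord.1 hν)
    · rw [hfdef]
      dsimp only
      split
      · exact hA _
      · exact h0
    · intro x hx
      have hSb : ∀ i ∈ x.2.2.toFinset, (i : Ordinal) < ν ∧ x.1 i < ν := by
        intro i hi
        have hne : x.1 i ≠ 0 := by simpa using hi
        have hiα : (i : Ordinal) < α := by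
          by_contra h
          exact hne (hx i (le_of_not_gt h))
        constructor
        · exact hiα.trans_le (le_max_left _ _)
        · refine lt_of_lt_of_le (x.2.1 i) (le_trans ?_ (le_max_right _ _))
          exact Ordinal.le_bsup (fun a ha => (lam ⟨a, ha.trans hα⟩).ord) _ hiα
      obtain ⟨l, hl⟩ := exists_decode x.1 x.2.2.toFinset
        (fun i hi => by simpa using hi) hSb
      have hex : ∃ y : SigmaProd κ lam, y.1 = decode κ ν l :=
        ⟨x, funext fun i => (hl i).symm⟩
      have hxeq : hex.choose = x := by
        apply Subtype.ext
        rw [hex.choose_spec]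
        exact funext fun i => hl i
      have : f l = A x := by
        rw [hfdef]; dsimp only
        rw [dif_pos hex, hxeq]
      rw [← this]
      exact Ordinal.le_iSup f l
  -- the fusion sequence
  obtain ⟨step, hstep1, hstep2⟩ : ∃ step : {o : Ordinal // o < κ.ord} → {o : Ordinal // o < κ.ord},
      (∀ p : {o : Ordinal // o < κ.ord}, p.1 < (step p).1) ∧
      (∀ (p : {o : Ordinal // o < κ.ord}) (x : SigmaProd κ lam),
        (∀ i : SmallOrd κ, p.1 ≤ (i : Ordinal) → x.1 i = 0) →
          A x ≤ (step p).1) := by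
    refine ⟨fun p => ⟨max ((p : Ordinal) + 1) (bound p.1 p.2).choose,
      max_lt ?_ (bound p.1 p.2).choose_spec.1⟩, fun p => ?_, fun p x hx => ?_⟩
    · rw [Ordinal.add_one_eq_succ]
      exact (Cardinal.isSuccLimit_ord hreg.aleph0_le).succ_lt p.2
    · exact lt_of_lt_of_le
        (by rw [Ordinal.add_one_eq_succ]; exact Order.lt_succ p.1)
        (le_max_left _ _)
    · exact le_trans ((bound p.1 p.2).choose_spec.2 x hx) (le_max_right _ _)
  set g : ℕ → {o : Ordinal // o < κ.ord} := fun n => step^[n] ⟨0, h0⟩ with hg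
  have hgsucc : ∀ n, g (n + 1) = step (g n) := by
    intro n
    rw [hg]
    exact Function.iterate_succ_apply' step n _
  have hgmono : StrictMono fun n => (g n : Ordinal) := by
    apply strictMono_nat_of_lt_succ
    intro n
    rw [hgsucc n]
    exact hstep1 (g n)
  set αs : Ordinal := ⨆ n, (g n : Ordinal) with hαs
  have hαslt : αs < κ.ord := by
    rw [hαs]
    exact Cardinal.iSup_lt_ord_lift_of_isRegular (f := fun n => (g n : Ordinal)) hreg
      (by rw [Cardinal.mk_nat, Cardinal.lift_aleph0]; exact hunc) fun n => (g n).2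
  refine ⟨αs, hαslt, fun x => ?_⟩
  -- truncation of x below αs
  set xf : SmallOrd κ → Ordinal := fun i => if (i : Ordinal) < αs then x.1 i else 0
    with hxf
  have hxb : ∀ i, xf i < (lam i).ord := by
    intro i
    rw [hxf]
    dsimp only
    split
    · exact x.2.1 i
    · rw [Cardinal.lt_ord]
      simpa using lt_trans zero_lt_one (hlam i).1
  have hxfin : {i | xf i ≠ 0}.Finite := by
    refine x.2.2.subset fun i hi => ?_
    simp only [hxf, Set.mem_setOf_eq] at hi ⊢
    intro h
    apply hi
    split <;> simp [h]
  set x' : SigmaProd κ lam := ⟨xf, hxb, hxfin⟩ with hx'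
  -- the support of x' is bounded by some g N
  have hss : ∀ i ∈ hxfin.toFinset, ∃ n, (i : Ordinal) < (g n : Ordinal) := by
    intro i hi
    have : xf i ≠ 0 := by simpa using hi
    have hiαs : (i : Ordinal) < αs := by
      by_contra h
      exact this (by rw [hxf]; simp [if_neg h])
    rw [hαs] at hiαs
    exact Ordinal.lt_iSup_iff.mp hiαs
  set N : ℕ := hxfin.toFinset.attach.sup fun j => (hss j.1 j.2).choose with hN
  have hxN : ∀ i : SmallOrd κ, ((g N : Ordinal) : Ordinal) ≤ (i : Ordinal) → x'.1 i = 0 := by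
    intro i hi
    by_contra h
    have hiS : i ∈ hxfin.toFinset := by simpa using h
    have h1 : (i : Ordinal) < (g (hss i hiS).choose : Ordinal) := (hss i hiS).choose_spec
    have h2 : (hss i hiS).choose ≤ N := Finset.le_sup (f := fun j => (hss j.1 j.2).choose) (Finset.mem_attach _ ⟨i, hiS⟩)
    exact absurd (h1.trans_le (hgmono.monotone h2)) (not_lt_of_ge hi)
  have hAx' : A x' ≤ αs := by
    refine le_trans (hstep2 (g N) x' hxN) ?_
    rw [← hgsucc N, hαs]
    exact Ordinal.le_iSup (fun n => ((g n : Ordinal))) (N + 1)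
  refine ⟨V x', hV x', fun y hy => ?_⟩
  apply hAs x'
  intro i hi
  have hiαs : (i : Ordinal) < αs := lt_of_lt_of_le hi hAx'
  have : y.1 i = x.1 i := hy i hiαs
  rw [this]
  exact (if_pos hiαs).symm

end Stmt19

namespace Stmt19

/-- Truncation of a point below `α`. -/
noncomputable def trunc {κ : Cardinal.{u}} {lam : SmallOrd κ → Cardinal.{u}}
    (hlam : ∀ i, 1 < lam i ∧ lam i < κ) (x : SigmaProd κ lam) (α : Ordinal) :
    SigmaProd κ lam := by
  classical
  refine ⟨fun i => if (i : Ordinal) < α then x.1 i else 0, fun i => ?_, ?_⟩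
  · dsimp only
    split
    · exact x.2.1 i
    · rw [Cardinal.lt_ord]
      simpa using lt_trans zero_lt_one (hlam i).1
  · refine x.2.2.subset fun i hi => ?_
    simp only [Set.mem_setOf_eq] at hi ⊢
    intro h
    apply hi
    split <;> simp [h]

lemma trunc_apply_of_lt {κ : Cardinal.{u}} {lam : SmallOrd κ → Cardinal.{u}}
    (hlam : ∀ i, 1 < lam i ∧ lam i < κ) (x : SigmaProd κ lam) {α : Ordinal}
    {i : SmallOrd κ} (h : (i : Ordinal) < α) : (trunc hlam x α).1 i = x.1 i := by
  classical
  simp only [trunc]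
  rw [if_pos h]

lemma trunc_apply_of_le {κ : Cardinal.{u}} {lam : SmallOrd κ → Cardinal.{u}}
    (hlam : ∀ i, 1 < lam i ∧ lam i < κ) (x : SigmaProd κ lam) {α : Ordinal}
    {i : SmallOrd κ} (h : α ≤ (i : Ordinal)) : (trunc hlam x α).1 i = 0 := by
  classical
  simp only [trunc]
  rw [if_neg (not_lt_of_ge h)]

theorem paracompact {κ : Cardinal.{u}} {lam : SmallOrd κ → Cardinal.{u}}
    (hreg : κ.IsRegular) (hunc : Cardinal.aleph0 < κ)
    (hlam : ∀ i, 1 < lam i ∧ lam i < κ) :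
    ParacompactSpace (SigmaProd κ lam) := by
  constructor
  intro ι s hso hsc
  obtain ⟨α, hα, hcov⟩ := uniform hreg hunc hlam (Set.range s)
    (by rintro V ⟨a, rfl⟩; exact hso a) (by rw [Set.sUnion_range]; exact hsc)
  classical
  refine ⟨{y : SigmaProd κ lam // ∀ i : SmallOrd κ, α ≤ (i : Ordinal) → y.1 i = 0},
    fun y => basicSet y.1 α, fun y => isOpen_basicSet _ hα, ?_, ?_, ?_⟩
  · -- covers
    apply Set.eq_univ_of_forall
    intro x
    refine Set.mem_iUnion.2 ⟨⟨trunc hlam x α, fun i hi => trunc_apply_of_le hlam x hi⟩, ?_⟩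
    intro i hi
    exact (trunc_apply_of_lt hlam x hi).symm
  · -- locally finite
    intro x
    refine ⟨basicSet x α, (isOpen_basicSet x hα).mem_nhds (mem_basicSet_self x α), ?_⟩
    have hsub : {y : {y : SigmaProd κ lam // ∀ i : SmallOrd κ, α ≤ (i : Ordinal) → y.1 i = 0} |
        (basicSet y.1 α ∩ basicSet x α).Nonempty}.Subsingleton := by
      rintro y₁ hy₁ y₂ hy₂
      obtain ⟨z₁, hz₁, hz₁'⟩ := hy₁
      obtain ⟨z₂, hz₂, hz₂'⟩ := hy₂
      refine Subtype.ext (Subtype.ext (funext fun i => ?_))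
      rcases lt_or_ge (i : Ordinal) α with hi | hi
      · rw [← hz₁ i hi, hz₁' i hi, ← hz₂' i hi, hz₂ i hi]
      · rw [y₁.2 i hi, y₂.2 i hi]
    exact hsub.finite
  · -- refinement
    rintro y
    obtain ⟨V, ⟨a, rfl⟩, hVs⟩ := hcov y.1
    exact ⟨a, hVs⟩

theorem final (κ : Cardinal) (hreg : κ.IsRegular) (hunc : Cardinal.aleph0 < κ)
    (lam : SmallOrd κ → Cardinal) (hlam : ∀ i, 1 < lam i ∧ lam i < κ) :
    (∀ 𝒱 : Set (Set (SigmaProd κ lam)), (∀ V ∈ 𝒱, IsOpen V) → ⋃₀ 𝒱 = Set.univ →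
      ∃ α < κ.ord, ∀ x : SigmaProd κ lam, ∃ V ∈ 𝒱, basicSet x α ⊆ V) ∧
    ParacompactSpace (SigmaProd κ lam) :=
  ⟨fun 𝒱 hop hcov => uniform hreg hunc hlam 𝒱 hop hcov, paracompact hreg hunc hlam⟩

end Stmt19

/-- For a regular uncountable cardinal `κ` and cardinals `1 < λ_i < κ`, every open cover
`𝒱` of the `σ`-product `X = ⊙_{i ∈ κ} λ_i` admits an ordinal `α ∈ κ` such that every
basic set `U_α[x]` is contained in some member of `𝒱`; consequently `X` is paracompact. -/
theorem stmt_19 (κ : Cardinal) (hreg : κ.IsRegular) (hunc : Cardinal.aleph0 < κ)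
    (lam : SmallOrd κ → Cardinal) (hlam : ∀ i, 1 < lam i ∧ lam i < κ) :
    (∀ 𝒱 : Set (Set (SigmaProd κ lam)), (∀ V ∈ 𝒱, IsOpen V) → ⋃₀ 𝒱 = Set.univ →
      ∃ α < κ.ord, ∀ x : SigmaProd κ lam, ∃ V ∈ 𝒱, basicSet x α ⊆ V) ∧
    ParacompactSpace (SigmaProd κ lam) :=
  Stmt19.final κ hreg hunc lam hlam
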